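/- Define the expected one-step rewards under the ε-greedy always-defect policy: R_D = (1−ε)·r_DD + ε·r_DC and R_C = (1−ε)·r_CD + ε·r_CC. Then the Q-table Q given by Q(s,D) = R_D/(1−γ) and Q(s,C) = R_C + γ·R_D/(1−γ) for every state s ∈ S satisfies, for all s ∈ S and a1 ∈ A, Q(s,a1) = (1−ε)·(r_{a1 D} + γ·max_a Q((a1,D),a)) + ε·(r_{a1 C} + γ·max_a Q((a1,C),a)); moreover Q(s,D) > Q(s,C) for every state s, so Q is an ε-greedy fixed point of the self-play multi-agent Bellman equation whose greedy policy is always-defect. -/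
import Mathlib


inductive Act | C | D
deriving DecidableEq

open Act

abbrev State := Act × Act

/-- the ε-greedy always-defect fixed point of the self-play
multi-agent Bellman equation. -/
theorem always_defect_fixed_point
    (rCC rCD rDC rDD : ℝ)
    (h1 : rDC > rCC) (h2 : rCC > rDD) (h3 : rDD > rCD)
    (h4 : 2 * rCC > rCD + rDC)
    (r : Act → Act → ℝ)
    (hrCC : r C C = rCC) (hrCD : r C D = rCD)
    (hrDC : r D C = rDC) (hrDD : r D D = rDD)
    (γ ε : ℝ) (hγ0 : 0 < γ) (hγ1 : γ < 1) (hε0 : 0 ≤ ε) (hε1 : ε < 1 / 2)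
    (RD RC : ℝ)
    (hRD : RD = (1 - ε) * rDD + ε * rDC)
    (hRC : RC = (1 - ε) * rCD + ε * rCC)
    (Q : State → Act → ℝ)
    (hQD : ∀ s : State, Q s D = RD / (1 - γ))
    (hQC : ∀ s : State, Q s C = RC + γ * RD / (1 - γ)) :
    (∀ (s : State) (a1 : Act),
        Q s a1 = (1 - ε) * (r a1 D + γ * max (Q (a1, D) C) (Q (a1, D) D))
          + ε * (r a1 C + γ * max (Q (a1, C) C) (Q (a1, C) D)))
    ∧ ∀ s : State, Q s D > Q s C := by
  have hγ : (1 : ℝ) - γ > 0 := by linarith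
  have hgt : ∀ s : State, Q s D > Q s C := by
    intro s
    rw [hQD, hQC]
    have hdiff : RD - RC > 0 := by
      rw [hRD, hRC]; nlinarith
    have : RD / (1 - γ) = RD + γ * RD / (1 - γ) := by
      field_simp; ring
    rw [this]; linarith
  refine ⟨?_, hgt⟩
  intro s a1
  have hmax : ∀ s' : State, max (Q s' C) (Q s' D) = RD / (1 - γ) := by
    intro s'
    rw [max_eq_right (le_of_lt (hgt s')), hQD]
  cases a1 with
  | D =>
    rw [hQD, hmax, hmax, hrDD, hrDC]
    field_simp
    rw [hRD]; ring
  | C =>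
    rw [hQC, hmax, hmax, hrCD, hrCC]
    rw [hRC]; field_simp; ring
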